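/- For all integers m ≥ 1 and n ≥ 1, F^k_{m+n} = F^k_m · F^k_n + Σ_{i=2}^{k} Σ_{j=1}^{i−1} F^k_{m−j} · F^k_{n−i+j}, where k ≥ 2 is an integer and F^k of a negative index is 0. -/
import Mathlib

private def A (F : ℤ → ℤ) (n : ℤ) (r : ℕ) : ℤ := ∑ t ∈ Finset.Icc 1 r, F (n - t)

private lemma A_zero (F : ℤ → ℤ) (n : ℤ) : A F n 0 = 0 := by simp [A]

private lemma A_succ (F : ℤ → ℤ) (n : ℤ) (r : ℕ) :
    A F n (r + 1) = A F n r + F (n - ((r : ℤ) + 1)) := by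
  unfold A
  rw [Finset.sum_Icc_succ_top (by omega)]
  push_cast
  ring_nf

private lemma sum_Icc_one (g : ℕ → ℤ) (c : ℕ) :
    ∑ j ∈ Finset.Icc 1 c, g j = ∑ j ∈ Finset.range c, g (j + 1) := by
  induction c with
  | zero => simp
  | succ c ih => rw [Finset.sum_Icc_succ_top (by omega), ih, Finset.sum_range_succ]

private lemma A_shift (F : ℤ → ℤ) (n : ℤ) (r : ℕ) :
    A F n (r + 1) = F (n - 1) + A F (n - 1) r := by
  induction r with
  | zero => simp [A_succ, A_zero]
  | succ r ih =>
    rw [A_succ, ih, A_succ]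
    push_cast
    have h : n - ((r : ℤ) + 1 + 1) = n - 1 - ((r : ℤ) + 1) := by ring
    rw [h]
    ring

private lemma sum_range_F (F : ℤ → ℤ) (m : ℤ) (r : ℕ) :
    ∑ j ∈ Finset.range r, F (m - j) = A F (m + 1) r := by
  induction r with
  | zero => simp [A_zero]
  | succ r ih =>
    rw [Finset.sum_range_succ, ih, A_succ]
    have h : m + 1 - ((r : ℤ) + 1) = m - r := by ring
    rw [h]

private lemma A_one (F : ℤ → ℤ) (hF0 : F 0 = 1) (hFneg : ∀ n : ℤ, n < 0 → F n = 0)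
    (r : ℕ) (hr : 1 ≤ r) : A F 1 r = 1 := by
  induction r with
  | zero => omega
  | succ r ih =>
    rcases Nat.eq_zero_or_pos r with h | h
    · subst h
      rw [A_succ, A_zero]
      norm_num [hF0]
    · rw [A_succ, ih h, hFneg (1 - ((r : ℤ) + 1)) (by omega)]
      ring

private def P (F : ℤ → ℤ) (k : ℕ) (m n : ℤ) : ℤ :=
  ∑ j ∈ Finset.range k, F (m - j) * A F n (k - j)

private lemma P_base (F : ℤ → ℤ) (k : ℕ)
    (hF0 : F 0 = 1) (hFneg : ∀ n : ℤ, n < 0 → F n = 0)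
    (hFrec : ∀ n : ℤ, 1 ≤ n → F n = A F n k)
    (m : ℤ) (hm : 0 ≤ m) : P F k m 1 = F (m + 1) := by
  unfold P
  have h1 : ∀ j ∈ Finset.range k, F (m - j) * A F 1 (k - j) = F (m - j) := by
    intro j hj
    rw [A_one F hF0 hFneg (k - j) (by simp at hj; omega)]
    ring
  rw [Finset.sum_congr rfl h1, sum_range_F, ← hFrec (m + 1) (by omega)]

private lemma P_shift (F : ℤ → ℤ) (k : ℕ) (hk : 1 ≤ k)
    (hFrec : ∀ n : ℤ, 1 ≤ n → F n = A F n k)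
    (m n : ℤ) (hm : 0 ≤ m) (hn : 1 ≤ n) :
    P F k (m + 1) n = P F k m (n + 1) := by
  obtain ⟨c, rfl⟩ : ∃ c, k = c + 1 := ⟨k - 1, by omega⟩
  unfold P
  -- Left side: peel off the j = 0 term
  rw [Finset.sum_range_succ']
  -- Right side: rewrite A F (n+1) (k - j) = F n + A F n (k - 1 - j)
  have hR : ∀ j ∈ Finset.range (c + 1),
      F (m - j) * A F (n + 1) (c + 1 - j) = F (m - j) * F n + F (m - j) * A F n (c - j) := by
    intro j hj
    simp only [Finset.mem_range] at hj
    have h1 : c + 1 - j = (c - j) + 1 := by omega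
    rw [h1, A_shift]
    have h2 : n + 1 - 1 = n := by ring
    rw [h2]; ring
  rw [Finset.sum_congr rfl hR, Finset.sum_add_distrib, ← Finset.sum_mul, sum_range_F,
    ← hFrec (m + 1) (by omega)]
  have hL : ∀ j ∈ Finset.range c,
      F (m + 1 - ((j + 1 : ℕ) : ℤ)) * A F n (c + 1 - (j + 1))
        = F (m - j) * A F n (c - j) := by
    intro j hj
    have h1 : m + 1 - ((j + 1 : ℕ) : ℤ) = m - j := by push_cast; ring
    have h2 : c + 1 - (j + 1) = c - j := by omega
    rw [h1, h2]
  rw [Finset.sum_congr rfl hL, Finset.sum_range_succ]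
  simp only [Nat.sub_self, A_zero, mul_zero, add_zero, Nat.cast_zero, sub_zero, Nat.sub_zero]
  rw [← hFrec n hn]
  ring

private lemma main_claim (F : ℤ → ℤ) (k : ℕ) (hk : 1 ≤ k)
    (hF0 : F 0 = 1) (hFneg : ∀ n : ℤ, n < 0 → F n = 0)
    (hFrec : ∀ n : ℤ, 1 ≤ n → F n = A F n k) :
    ∀ n : ℤ, 1 ≤ n → ∀ m : ℤ, 0 ≤ m → F (m + n) = P F k m n := by
  refine Int.le_induction ?_ ?_
  · intro m hm
    rw [P_base F k hF0 hFneg hFrec m hm]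
  · intro n hn ih m hm
    have h1 : m + (n + 1) = (m + 1) + n := by ring
    rw [h1, ih (m + 1) (by omega), P_shift F k hk hFrec m n hm hn]

/-- The double-sum reindexing: a pure sum identity, by induction on the bound. -/
private lemma DS_eq (F : ℤ → ℤ) (m n : ℤ) (c : ℕ) :
    (∑ i ∈ Finset.Icc 2 (c + 1), ∑ j ∈ Finset.Icc 1 (i - 1),
        F (m - (j : ℤ)) * F (n - (i : ℤ) + (j : ℤ)))
      = ∑ j ∈ Finset.range c, F (m - 1 - j) * A F n (c - j) := by
  induction c with
  | zero => simp
  | succ c ih =>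
    rw [Finset.sum_Icc_succ_top (by omega : 2 ≤ c + 1 + 1), ih]
    simp only [Nat.add_sub_cancel]
    rw [sum_Icc_one (fun j => F (m - (j : ℤ)) * F (n - ((c + 1 + 1 : ℕ) : ℤ) + (j : ℤ)))]
    have hsp : ∀ j ∈ Finset.range (c + 1),
        F (m - 1 - j) * A F n (c + 1 - j)
          = F (m - 1 - j) * A F n (c - j)
            + F (m - ((j + 1 : ℕ) : ℤ)) * F (n - ((c + 1 + 1 : ℕ) : ℤ) + ((j + 1 : ℕ) : ℤ)) := by
      intro j hj
      simp only [Finset.mem_range] at hj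
      have h1 : c + 1 - j = (c - j) + 1 := by omega
      rw [h1, A_succ]
      have h2 : n - (((c - j : ℕ) : ℤ) + 1) = n - ((c + 1 + 1 : ℕ) : ℤ) + ((j + 1 : ℕ) : ℤ) := by
        have hc : ((c - j : ℕ) : ℤ) = (c : ℤ) - j := by omega
        rw [hc]; push_cast; ring
      have h3 : m - 1 - (j : ℤ) = m - ((j + 1 : ℕ) : ℤ) := by push_cast; ring
      rw [h2, h3]
      ring
    rw [Finset.sum_congr rfl hsp, Finset.sum_add_distrib,
      Finset.sum_range_succ (fun j => F (m - 1 - (j : ℤ)) * A F n (c - j)),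
      Nat.sub_self, A_zero]
    ring

/-- For all integers `m ≥ 1` and `n ≥ 1`, with `k ≥ 2` and `F = F^k`
the `k`-Fibonacci function (`F 0 = 1`, `F` vanishes on negatives, and
`F n = F (n-1) + ⋯ + F (n-k)` for `n ≥ 1`):
`F (m+n) = F m · F n + Σ_{i=2}^{k} Σ_{j=1}^{i-1} F (m-j) · F (n-i+j)`. -/
theorem kFib_addition_formula (k : ℕ) (hk : 2 ≤ k) (F : ℤ → ℤ)
    (hF0 : F 0 = 1) (hFneg : ∀ n : ℤ, n < 0 → F n = 0)
    (hFrec : ∀ n : ℤ, 1 ≤ n → F n = ∑ i ∈ Finset.Icc 1 k, F (n - i))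
    (m n : ℤ) (hm : 1 ≤ m) (hn : 1 ≤ n) :
    F (m + n) = F m * F n +
      ∑ i ∈ Finset.Icc 2 k, ∑ j ∈ Finset.Icc 1 (i - 1),
        F (m - (j : ℤ)) * F (n - (i : ℤ) + (j : ℤ)) := by
  have hFrec' : ∀ n : ℤ, 1 ≤ n → F n = A F n k := hFrec
  obtain ⟨c, rfl⟩ : ∃ c, k = c + 1 := ⟨k - 1, by omega⟩
  rw [DS_eq F m n c]
  rw [main_claim F (c + 1) (by omega) hF0 hFneg hFrec' n hn m (by omega)]
  unfold P
  rw [Finset.sum_range_succ']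
  have hL : ∀ j ∈ Finset.range c,
      F (m - ((j + 1 : ℕ) : ℤ)) * A F n (c + 1 - (j + 1))
        = F (m - 1 - j) * A F n (c - j) := by
    intro j hj
    have h1 : m - ((j + 1 : ℕ) : ℤ) = m - 1 - j := by push_cast; ring
    have h2 : c + 1 - (j + 1) = c - j := by omega
    rw [h1, h2]
  rw [Finset.sum_congr rfl hL]
  simp only [Nat.cast_zero, sub_zero, Nat.sub_zero]
  rw [← hFrec' n hn]
  ring
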